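/- There exists a Lipschitz function g : [0,1] → ℝ with g(0) = 0 and Lipschitz constant ‖g‖ = 1 which does not attain its pointwise norm: for every p ∈ (0,1] one has sup_{q≠p} |g(q)-g(p)|/|q-p| < 1, and sup_{q≠0} |g(q)-g(0)|/q < 1. Consequently PNA([0,1]) ≠ Lip₀([0,1]). -/

import Mathlib

open Filter Metric MeasureTheory

noncomputable def lipNorm {M : Type*} [MetricSpace M] (f : M → ℝ) : ℝ :=
  sSup {r : ℝ | ∃ p q : M, p ≠ q ∧ r = |f q - f p| / dist p q}

noncomputable def pnormAt {M : Type*} [MetricSpace M] (f : M → ℝ) (p : M) : ℝ :=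
  sSup {r : ℝ | ∃ q : M, q ≠ p ∧ r = |f q - f p| / dist p q}

/-- `f` strongly attains its (Lipschitz) norm. -/
def StronglyAttains {M : Type*} [MetricSpace M] (f : M → ℝ) : Prop :=
  ∃ p q : M, p ≠ q ∧ |f q - f p| / dist p q = lipNorm f

/-- `f` attains its pointwise norm. -/
def PointwiseAttains {M : Type*} [MetricSpace M] (f : M → ℝ) : Prop :=
  ∃ p : M, pnormAt f p = lipNorm f


open Real

noncomputable def Gf : ℝ → ℝ := fun x =>
  (Real.sqrt 2)⁻¹ * (x * Real.sin (Real.log x)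
    - 3/5 * (x^2 * Real.sin (Real.log x)) - 1/5 * (x^2 * Real.cos (Real.log x)))

noncomputable def Gd : ℝ → ℝ := fun x =>
  (Real.sqrt 2)⁻¹ * ((1 - x) * (Real.sin (Real.log x) + Real.cos (Real.log x)))

lemma sqrt2_pos : 0 < Real.sqrt 2 := by positivity

lemma sqrt2_inv_le : (Real.sqrt 2)⁻¹ ≤ 71/100 := by
  rw [inv_le_comm₀ sqrt2_pos (by norm_num)]
  rw [show ((71:ℝ)/100)⁻¹ = Real.sqrt (((71/100)⁻¹)^2) by rw [Real.sqrt_sq]; norm_num]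
  exact Real.sqrt_le_sqrt (by norm_num)

lemma Gf_zero : Gf 0 = 0 := by simp [Gf]

lemma hasDerivAt_Gf {x : ℝ} (hx : 0 < x) : HasDerivAt Gf (Gd x) x := by
  have hlog : HasDerivAt Real.log x⁻¹ x := Real.hasDerivAt_log hx.ne'
  have hs : HasDerivAt (fun y => Real.sin (Real.log y)) (Real.cos (Real.log x) * x⁻¹) x :=
    (Real.hasDerivAt_sin _).comp x hlog
  have hc : HasDerivAt (fun y => Real.cos (Real.log y)) (-Real.sin (Real.log x) * x⁻¹) x :=
    (Real.hasDerivAt_cos _).comp x hlog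
  have hx2 : HasDerivAt (fun y : ℝ => y^2) (2*x) x := by
    simpa using hasDerivAt_pow 2 x
  have h1 := (hasDerivAt_id x).mul hs
  have h2 := (hx2.mul hs).const_mul (3/5 : ℝ)
  have h3 := (hx2.mul hc).const_mul (1/5 : ℝ)
  have h := ((h1.sub h2).sub h3).const_mul ((Real.sqrt 2)⁻¹)
  convert h using 1
  · rfl
  · rfl
  · rfl
  simp only [Gd, id_eq]
  field_simp
  ring

lemma sin_add_cos_abs_le (t : ℝ) : |Real.sin t + Real.cos t| ≤ Real.sqrt 2 := by
  have h : (Real.sin t + Real.cos t)^2 ≤ 2 := by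
    nlinarith [Real.sin_sq_add_cos_sq t, sq_nonneg (Real.sin t - Real.cos t)]
  have := Real.sqrt_le_sqrt h
  rwa [Real.sqrt_sq_eq_abs] at this

lemma Gd_abs_le {x : ℝ} (hx1 : x ≤ 1) : |Gd x| ≤ 1 - x := by
  have h1 : |Gd x| = (Real.sqrt 2)⁻¹ * ((1-x) * |Real.sin (Real.log x) + Real.cos (Real.log x)|) := by
    rw [Gd, abs_mul, abs_mul, abs_of_nonneg (by positivity : (0:ℝ) ≤ (Real.sqrt 2)⁻¹),
      abs_of_nonneg (by linarith : (0:ℝ) ≤ 1 - x)]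
  rw [h1]
  have h2 := sin_add_cos_abs_le (Real.log x)
  have h3 : (1-x) * |Real.sin (Real.log x) + Real.cos (Real.log x)| ≤ (1-x) * Real.sqrt 2 :=
    mul_le_mul_of_nonneg_left h2 (by linarith)
  calc (Real.sqrt 2)⁻¹ * ((1-x) * |Real.sin (Real.log x) + Real.cos (Real.log x)|)
      ≤ (Real.sqrt 2)⁻¹ * ((1-x) * Real.sqrt 2) :=
        mul_le_mul_of_nonneg_left h3 (by positivity)
    _ = 1 - x := by
        field_simp

lemma Gf_abs_le {x : ℝ} (hx : 0 ≤ x) (hx1 : x ≤ 1) : |Gf x| ≤ (Real.sqrt 2)⁻¹ * x := by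
  set s := Real.sin (Real.log x)
  set c := Real.cos (Real.log x)
  have hGf : Gf x = (Real.sqrt 2)⁻¹ * (x * ((1 - 3/5*x) * s - x/5 * c)) := by
    simp only [Gf]; ring
  have hsc : s^2 + c^2 = 1 := Real.sin_sq_add_cos_sq _
  have hid : ((1-3/5*x)*s - x/5*c)^2 + ((1-3/5*x)*c + x/5*s)^2
      = ((1-3/5*x)^2 + (x/5)^2) * (s^2+c^2) := by ring
  rw [hsc, mul_one] at hid
  have hab2 : (1-3/5*x)^2 + (x/5)^2 ≤ 1 := by nlinarith
  have hsq : ((1-3/5*x)*s - x/5*c)^2 ≤ 1 := by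
    nlinarith [sq_nonneg ((1-3/5*x)*c + x/5*s)]
  have he : |(1 - 3/5*x) * s - x/5 * c| ≤ 1 := by
    rw [abs_le]
    constructor <;> nlinarith [sq_nonneg ((1 - 3/5*x) * s - x/5 * c + 1), sq_nonneg ((1 - 3/5*x) * s - x/5 * c - 1)]
  rw [hGf, abs_mul, abs_mul, abs_of_nonneg (by positivity : (0:ℝ) ≤ (Real.sqrt 2)⁻¹),
    abs_of_nonneg hx]
  have : x * |(1 - 3/5*x) * s - x/5 * c| ≤ x * 1 := mul_le_mul_of_nonneg_left he hx
  nlinarith [inv_nonneg.2 (Real.sqrt_nonneg 2)]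

lemma chord_le {a b : ℝ} (ha : 0 < a) (hab : a ≤ b) (hb : b ≤ 1) :
    |Gf b - Gf a| ≤ (1 - a) * (b - a) := by
  have key := Convex.norm_image_sub_le_of_norm_hasDerivWithin_le
    (f := Gf) (f' := Gd) (s := Set.Icc a b) (C := 1 - a)
    (fun x hx => (hasDerivAt_Gf (lt_of_lt_of_le ha hx.1)).hasDerivWithinAt)
    (fun x hx => by
      rw [Real.norm_eq_abs]
      have := Gd_abs_le (x := x) (le_trans hx.2 hb)
      linarith [hx.1])
    (convex_Icc a b) (Set.left_mem_Icc.2 hab) (Set.right_mem_Icc.2 hab)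
  rwa [Real.norm_eq_abs, Real.norm_eq_abs, abs_of_nonneg (by linarith : (0:ℝ) ≤ b - a)] at key

lemma chord_ge {a b m : ℝ} (ha : 0 < a) (hab : a ≤ b) (hb : b ≤ 1) (hm1 : m ≤ 1)
    (hm : ∀ x ∈ Set.Icc a b, m ≤ Gd x) :
    (2*m - 1) * (b - a) ≤ Gf b - Gf a := by
  have key := Convex.norm_image_sub_le_of_norm_hasDerivWithin_le
    (f := fun y => m * y - Gf y) (f' := fun x => m - Gd x) (s := Set.Icc a b) (C := 1 - m)
    (fun x hx => ((hasDerivAt_id x).const_mul m).sub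
      (hasDerivAt_Gf (lt_of_lt_of_le ha hx.1)) |>.hasDerivWithinAt |>.congr_deriv (by ring))
    (fun x hx => by
      rw [Real.norm_eq_abs]
      show |m - Gd x| ≤ 1 - m
      rw [abs_le]
      have h1 := hm x hx
      have h2 := Gd_abs_le (x := x) (le_trans hx.2 hb)
      rw [abs_le] at h2
      refine ⟨by linarith [hx.1, ha], by linarith⟩)
    (convex_Icc a b) (Set.left_mem_Icc.2 hab) (Set.right_mem_Icc.2 hab)
  rw [Real.norm_eq_abs, Real.norm_eq_abs, abs_of_nonneg (by linarith : (0:ℝ) ≤ b - a)] at key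
  have key' : |(m*b - Gf b) - (m*a - Gf a)| ≤ (1-m) * (b-a) := key
  have h := (abs_le.1 key').2
  nlinarith [h]

lemma Gd_at_exp (n : ℕ) : Gd (Real.exp (Real.pi/4 - 2*Real.pi*n)) = 1 - Real.exp (Real.pi/4 - 2*Real.pi*n) := by
  have h : Real.log (Real.exp (Real.pi/4 - 2*Real.pi*n)) = Real.pi/4 - 2*Real.pi*n := Real.log_exp _
  have hs : Real.sin (Real.pi/4 - 2*Real.pi*n) = Real.sin (Real.pi/4) := by
    have := Real.sin_sub_int_mul_two_pi (Real.pi/4) (n : ℤ)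
    simpa [mul_comm] using this
  have hc : Real.cos (Real.pi/4 - 2*Real.pi*n) = Real.cos (Real.pi/4) := by
    have := Real.cos_sub_int_mul_two_pi (Real.pi/4) (n : ℤ)
    simpa [mul_comm] using this
  rw [Gd, h, hs, hc, Real.sin_pi_div_four, Real.cos_pi_div_four]
  have h2 : Real.sqrt 2 ≠ 0 := ne_of_gt sqrt2_pos
  have hsq : Real.sqrt 2 * Real.sqrt 2 = 2 := Real.mul_self_sqrt (by norm_num)
  field_simp
  ring

lemma continuousAt_Gd {x : ℝ} (hx : 0 < x) : ContinuousAt Gd x := by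
  have hlog : ContinuousAt Real.log x := Real.continuousAt_log hx.ne'
  exact continuousAt_const.mul ((continuousAt_const.sub continuousAt_id).mul
    ((Real.continuous_sin.continuousAt.comp hlog).add (Real.continuous_cos.continuousAt.comp hlog)))

lemma exists_good {ε : ℝ} (hε : 0 < ε) (hε1 : ε ≤ 1/2) :
    ∃ a b : ℝ, 0 < a ∧ a < b ∧ b ≤ 1 ∧ (1 - ε) * (b - a) ≤ Gf b - Gf a := by
  -- pick n with exp (π/4 - 2πn) < ε/4
  obtain ⟨n, hn⟩ := exists_nat_gt (4/ε)
  set t : ℝ := Real.pi/4 - 2*Real.pi*n with ht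
  set x₀ := Real.exp t with hx₀
  have hπ : (3:ℝ) < Real.pi := by
    have := Real.pi_gt_three; linarith
  have hx₀pos : 0 < x₀ := Real.exp_pos _
  have hx₀small : x₀ < ε/4 := by
    have h1 : -t + 1 ≤ Real.exp (-t) := Real.add_one_le_exp _
    have hnn : (4:ℝ)/ε < n := hn
    have hn0 : (0:ℝ) ≤ n := Nat.cast_nonneg n
    have hexp : (4:ℝ)/ε < Real.exp (-t) := by
      have h2 : -t = 2*Real.pi*n - Real.pi/4 := by rw [ht]; ring
      rw [h2] at h1 ⊢
      have hpn : 3*(n:ℝ) ≤ Real.pi*n := mul_le_mul_of_nonneg_right (le_of_lt hπ) hn0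
      have hπ4 : Real.pi < 4 := by linarith [Real.pi_lt_d2]
      linarith
    have h5 : x₀ * Real.exp (-t) = 1 := by
      rw [hx₀, ← Real.exp_add]; simp
    have h6 : x₀ * (4/ε) < x₀ * Real.exp (-t) := by
      exact mul_lt_mul_of_pos_left hexp hx₀pos
    rw [h5] at h6
    have h7 : (0:ℝ) < 4/ε := by positivity
    calc x₀ = x₀ * (4/ε) * (ε/4) := by field_simp
      _ < 1 * (ε/4) := by
          apply mul_lt_mul_of_pos_right h6 (by positivity)
      _ = ε/4 := one_mul _
  have hx₀1 : x₀ < 1 := by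
    have : ε/4 ≤ 1 := by linarith
    linarith
  -- Gd x₀ = 1 - x₀ > 1 - ε/4 > m := 1 - ε/2
  have hGdx₀ : Gd x₀ = 1 - x₀ := Gd_at_exp n
  have hgt : 1 - ε/2 < Gd x₀ := by rw [hGdx₀]; linarith
  have hcont : ContinuousAt Gd x₀ := continuousAt_Gd hx₀pos
  have hnhds : {y : ℝ | 1 - ε/2 < Gd y} ∈ nhds x₀ := hcont (Ioi_mem_nhds hgt)
  obtain ⟨δ, hδpos, hδ⟩ := Metric.mem_nhds_iff.1 hnhds
  set b := min (x₀ + δ/2) ((x₀+1)/2) with hb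
  have hbx : x₀ < b := by
    apply lt_min <;> linarith
  have hb1 : b ≤ 1 := by
    have : b ≤ (x₀+1)/2 := min_le_right _ _
    linarith
  have hmem : ∀ y ∈ Set.Icc x₀ b, 1 - ε/2 ≤ Gd y := by
    intro y hy
    have : y ∈ Metric.ball x₀ δ := by
      rw [Metric.mem_ball, Real.dist_eq, abs_of_nonneg (by linarith [hy.1])]
      have : b ≤ x₀ + δ/2 := min_le_left _ _
      linarith [hy.2]
    exact le_of_lt (hδ this)
  refine ⟨x₀, b, hx₀pos, hbx, hb1, ?_⟩
  have := chord_ge hx₀pos (le_of_lt hbx) hb1 (by linarith) hmem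
  have h2m : 2*(1 - ε/2) - 1 = 1 - ε := by ring
  rw [h2m] at this
  exact this

lemma chord_le' {a b : ℝ} (ha : 0 ≤ a) (hab : a ≤ b) (hb : b ≤ 1) :
    |Gf b - Gf a| ≤ b - a := by
  rcases eq_or_lt_of_le ha with h | h
  · subst h
    rw [Gf_zero, sub_zero]
    calc |Gf b| ≤ (Real.sqrt 2)⁻¹ * b := Gf_abs_le hab hb
      _ ≤ 1 * b := mul_le_mul_of_nonneg_right (by linarith [sqrt2_inv_le]) hab
      _ = b - 0 := by ring
  · calc |Gf b - Gf a| ≤ (1 - a) * (b - a) := chord_le h hab hb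
      _ ≤ 1 * (b - a) := mul_le_mul_of_nonneg_right (by linarith) (by linarith)
      _ = b - a := one_mul _

/-- there is a norm-one Lipschitz function on [0,1] vanishing at 0
which does not attain its pointwise norm at any point. -/
theorem stmt5 : ∃ g : (Set.Icc (0:ℝ) 1) → ℝ,
    g ⟨0, by norm_num⟩ = 0 ∧ LipschitzWith 1 g ∧ lipNorm g = 1 ∧
    (∀ p : (Set.Icc (0:ℝ) 1), pnormAt g p < 1) ∧ ¬ PointwiseAttains g := by
  set g : (Set.Icc (0:ℝ) 1) → ℝ := fun x => Gf x.1 with hgdef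
  -- basic chord bound
  have hchord : ∀ p q : (Set.Icc (0:ℝ) 1), |g q - g p| ≤ dist p q := by
    intro p q
    rw [Subtype.dist_eq, Real.dist_eq]
    rcases le_total p.1 q.1 with h | h
    · calc |g q - g p| ≤ q.1 - p.1 := chord_le' p.2.1 h q.2.2
        _ ≤ |p.1 - q.1| := by rw [abs_sub_comm]; exact le_abs_self _
    · calc |g q - g p| = |g p - g q| := abs_sub_comm _ _
        _ ≤ p.1 - q.1 := chord_le' q.2.1 h p.2.2
        _ ≤ |p.1 - q.1| := le_abs_self _
  have hLip : LipschitzWith 1 g := by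
    apply LipschitzWith.of_dist_le_mul
    intro p q
    rw [NNReal.coe_one, one_mul, Real.dist_eq, abs_sub_comm]
    exact hchord p q
  -- the lipNorm set is bounded above by 1
  have hub : ∀ r ∈ {r : ℝ | ∃ p q : (Set.Icc (0:ℝ) 1), p ≠ q ∧ r = |g q - g p| / dist p q},
      r ≤ 1 := by
    rintro r ⟨p, q, hne, rfl⟩
    rw [div_le_one (dist_pos.2 hne)]
    exact hchord p q
  have hbdd : BddAbove {r : ℝ | ∃ p q : (Set.Icc (0:ℝ) 1), p ≠ q ∧ r = |g q - g p| / dist p q} :=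
    ⟨1, hub⟩
  -- lipNorm g = 1
  have hnorm : lipNorm g = 1 := by
    rw [lipNorm]
    apply le_antisymm
    · exact Real.sSup_le hub (by norm_num)
    · by_contra hlt
      push_neg at hlt
      set L := sSup {r : ℝ | ∃ p q : (Set.Icc (0:ℝ) 1), p ≠ q ∧ r = |g q - g p| / dist p q} with hL
      have hε : (0:ℝ) < min ((1 - L)/2) (1/2) := by
        apply lt_min <;> linarith
      obtain ⟨a, b, ha, hab, hb1, hch⟩ := exists_good hε (min_le_right _ _)
      have hamem : a ∈ Set.Icc (0:ℝ) 1 := ⟨le_of_lt ha, le_trans (le_of_lt hab) hb1⟩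
      have hbmem : b ∈ Set.Icc (0:ℝ) 1 := ⟨le_trans (le_of_lt ha) (le_of_lt hab), hb1⟩
      set P : Set.Icc (0:ℝ) 1 := ⟨a, hamem⟩
      set Q : Set.Icc (0:ℝ) 1 := ⟨b, hbmem⟩
      have hPQ : P ≠ Q := fun h => absurd (congrArg Subtype.val h) (ne_of_lt hab)
      have hmem : |g Q - g P| / dist P Q ∈
          {r : ℝ | ∃ p q : (Set.Icc (0:ℝ) 1), p ≠ q ∧ r = |g q - g p| / dist p q} :=
        ⟨P, Q, hPQ, rfl⟩
      have hdist : dist P Q = b - a := by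
        rw [Subtype.dist_eq, Real.dist_eq, abs_sub_comm, abs_of_nonneg (by linarith)]
      have hval : 1 - min ((1 - L)/2) (1/2) ≤ |g Q - g P| / dist P Q := by
        rw [hdist, le_div_iff₀ (by linarith : (0:ℝ) < b - a)]
        calc (1 - min ((1 - L)/2) (1/2)) * (b - a) ≤ Gf b - Gf a := hch
          _ ≤ |g Q - g P| := le_abs_self _
      have hle := le_csSup hbdd hmem
      have hmin : min ((1 - L)/2) (1/2) ≤ (1 - L)/2 := min_le_left _ _
      have : 1 - min ((1 - L)/2) (1/2) ≤ L := le_trans hval hle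
      linarith
  -- pointwise norms
  have hpnorm : ∀ p : (Set.Icc (0:ℝ) 1), pnormAt g p < 1 := by
    rintro ⟨pv, hp0, hp1⟩
    rcases eq_or_lt_of_le hp0 with hpz | hppos
    · -- p = 0
      subst hpz
      have : pnormAt g ⟨0, hp0, hp1⟩ ≤ 71/100 := by
        rw [pnormAt]
        apply Real.sSup_le _ (by norm_num)
        rintro r ⟨q, hqne, rfl⟩
        have hq0 : 0 < q.1 := by
          rcases eq_or_lt_of_le q.2.1 with h | h
          · exact absurd (Subtype.ext h.symm) hqne
          · exact h
        have hdist : dist (⟨0, hp0, hp1⟩ : Set.Icc (0:ℝ) 1) q = q.1 := by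
          rw [Subtype.dist_eq, Real.dist_eq]
          show |0 - q.1| = q.1
          rw [zero_sub, abs_neg, abs_of_nonneg (le_of_lt hq0)]
        have hGp : g (⟨0, hp0, hp1⟩ : Set.Icc (0:ℝ) 1) = 0 := Gf_zero
        rw [hdist, div_le_iff₀ hq0, hGp, sub_zero]
        calc |g q| ≤ (Real.sqrt 2)⁻¹ * q.1 := Gf_abs_le q.2.1 q.2.2
          _ ≤ 71/100 * q.1 := mul_le_mul_of_nonneg_right sqrt2_inv_le (le_of_lt hq0)
      linarith
    · -- p > 0
      set c : ℝ := max (1 - pv/10) (9/10) with hc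
      have hc1 : c < 1 := max_lt (by linarith) (by norm_num)
      have hcA : 1 - pv/10 ≤ c := le_max_left _ _
      have hcB : (9:ℝ)/10 ≤ c := le_max_right _ _
      have : pnormAt g ⟨pv, hp0, hp1⟩ ≤ c := by
        rw [pnormAt]
        apply Real.sSup_le _ (by linarith)
        rintro r ⟨q, hqne, rfl⟩
        have hqne' : q.1 ≠ pv := fun h => hqne (Subtype.ext h)
        have hdpos : 0 < dist (⟨pv, hp0, hp1⟩ : Set.Icc (0:ℝ) 1) q :=
          dist_pos.2 (fun h => hqne (h.symm))
        rw [div_le_iff₀ hdpos, Subtype.dist_eq, Real.dist_eq]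
        show |Gf q.1 - Gf pv| ≤ c * |pv - q.1|
        rcases lt_or_gt_of_ne hqne' with hlt | hgt
        · -- q < pv
          have habs : |pv - q.1| = pv - q.1 := abs_of_nonneg (by linarith)
          rw [habs]
          rcases le_or_gt (pv/10) q.1 with hcase | hcase
          · -- pv/10 ≤ q < pv
            have hq0 : 0 < q.1 := lt_of_lt_of_le (by linarith) hcase
            have h1 : |Gf pv - Gf q.1| ≤ (1 - q.1) * (pv - q.1) :=
              chord_le hq0 (le_of_lt hlt) hp1
            rw [abs_sub_comm]
            have h2 : (1 - q.1) * (pv - q.1) ≤ c * (pv - q.1) :=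
              mul_le_mul_of_nonneg_right (by linarith) (by linarith)
            linarith
          · -- q < pv/10
            have h1 : |Gf q.1 - Gf pv| ≤ |Gf q.1| + |Gf pv| := abs_sub _ _
            have h2 : |Gf q.1| ≤ 71/100 * q.1 :=
              le_trans (Gf_abs_le q.2.1 q.2.2) (mul_le_mul_of_nonneg_right sqrt2_inv_le q.2.1)
            have h3 : |Gf pv| ≤ 71/100 * pv :=
              le_trans (Gf_abs_le hp0 hp1) (mul_le_mul_of_nonneg_right sqrt2_inv_le hp0)
            have hq0 : (0:ℝ) ≤ q.1 := q.2.1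
            nlinarith [hcB]
        · -- pv < q
          have habs : |pv - q.1| = q.1 - pv := by
            rw [abs_sub_comm]; exact abs_of_nonneg (by linarith)
          rw [habs]
          have h1 : |Gf q.1 - Gf pv| ≤ (1 - pv) * (q.1 - pv) :=
            chord_le hppos (le_of_lt hgt) q.2.2
          have h2 : (1 - pv) * (q.1 - pv) ≤ c * (q.1 - pv) :=
            mul_le_mul_of_nonneg_right (by linarith) (by linarith)
          linarith
      linarith
  refine ⟨g, by show Gf 0 = 0; exact Gf_zero, hLip, hnorm, hpnorm, ?_⟩
  rintro ⟨p, hp⟩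
  rw [hnorm] at hp
  exact absurd hp (ne_of_lt (hpnorm p))
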